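/- There exist parameters exhibiting strict looseness of the cut-set bound in Case C: setting P_J = √P_X, C_1 = C_2 = (1/4)·log₂ P_X, then as P_X → ∞ the cut-set bound min{C_1+C_2, C_1 + (1/2)log₂(1+P_X/(P_J+1)), C_2 + (1/2)log₂(1+P_X/(P_J+1)), (1/2)log₂(1+2P_X)} divided by log₂ P_X tends to 1/2, while the modulo bound (1/2)(C_1+C_2+(1/2)log₂(1+P_X/P_J)) + (1/4)log₂(8πe) divided by log₂ P_X tends to 3/8. -/

import Mathlib

open Real Filter

lemma aux_log (h : ℝ → ℝ) (c L : ℝ) (hL : 0 < L)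
    (hh : Tendsto (fun x => h x / x ^ c) atTop (nhds L)) :
    Tendsto (fun x => Real.log (h x) / Real.log x) atTop (nhds c) := by
  have hpos : ∀ᶠ x : ℝ in atTop, 0 < h x := by
    filter_upwards [hh.eventually (eventually_gt_nhds (show L/2 < L by linarith)),
      eventually_gt_atTop (0:ℝ)] with x hx hx0
    have hxr : (0:ℝ) < x ^ c := Real.rpow_pos_of_pos hx0 c
    have h1 : 0 < h x / x ^ c := lt_trans (by linarith) hx
    have : h x = (h x / x ^ c) * x ^ c := by field_simp
    rw [this]; exact mul_pos h1 hxr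
  have hlog : Tendsto (fun x => Real.log (h x / x ^ c)) atTop (nhds (Real.log L)) :=
    (Real.continuousAt_log hL.ne').tendsto.comp hh
  have hinv : Tendsto (fun x : ℝ => (Real.log x)⁻¹) atTop (nhds 0) :=
    Real.tendsto_log_atTop.inv_tendsto_atTop
  have main : Tendsto (fun x => Real.log (h x / x ^ c) * (Real.log x)⁻¹ + c) atTop
      (nhds (Real.log L * 0 + c)) := (hlog.mul hinv).add tendsto_const_nhds
  rw [mul_zero, zero_add] at main
  refine main.congr' ?_
  filter_upwards [hpos, eventually_gt_atTop (1:ℝ)] with x hp hx1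
  have hx0 : (0:ℝ) < x := lt_trans one_pos hx1
  have hlx : 0 < Real.log x := Real.log_pos hx1
  rw [Real.log_div hp.ne' (Real.rpow_pos_of_pos hx0 c).ne', Real.log_rpow hx0]
  field_simp
  ring

lemma tendsto_ratio (h : ℝ → ℝ) (c L : ℝ) (hL : 0 < L)
    (hh : Tendsto (fun x => h x / x ^ c) atTop (nhds L)) :
    Tendsto (fun x => logb 2 (h x) / logb 2 x) atTop (nhds c) := by
  refine (aux_log h c L hL hh).congr' ?_
  filter_upwards [eventually_gt_atTop (1:ℝ)] with x hx
  have h2 : Real.log 2 ≠ 0 := by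
    have := Real.log_pos (by norm_num : (1:ℝ) < 2); linarith
  have hlx : Real.log x ≠ 0 := (Real.log_pos hx).ne'
  simp only [Real.logb]
  field_simp

lemma sqrt_tendsto : Tendsto Real.sqrt atTop atTop :=
  (tendsto_rpow_atTop (by norm_num : (0:ℝ) < 1/2)).congr
    (fun x => (Real.sqrt_eq_rpow x).symm)

lemma sqrt_inv_tendsto : Tendsto (fun x : ℝ => (Real.sqrt x)⁻¹) atTop (nhds 0) :=
  sqrt_tendsto.inv_tendsto_atTop

lemma hA : Tendsto (fun x : ℝ => Real.log (1 + x / (Real.sqrt x + 1)) / Real.log x)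
    atTop (nhds (1/2)) := by
  apply aux_log _ (1/2) 1 one_pos
  have base : Tendsto (fun x : ℝ => (Real.sqrt x)⁻¹ + (1 + (Real.sqrt x)⁻¹)⁻¹) atTop
      (nhds (0 + (1 + 0)⁻¹)) :=
    sqrt_inv_tendsto.add ((tendsto_const_nhds.add sqrt_inv_tendsto).inv₀ (by norm_num))
  rw [show ((0:ℝ) + (1+0)⁻¹) = 1 by norm_num] at base
  refine Tendsto.congr' ?_ base
  filter_upwards [eventually_gt_atTop (0:ℝ)] with x hx
  have hs : 0 < Real.sqrt x := Real.sqrt_pos.mpr hx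
  have hss : Real.sqrt x * Real.sqrt x = x := Real.mul_self_sqrt hx.le
  rw [← Real.sqrt_eq_rpow]
  field_simp
  linear_combination hss

lemma hB : Tendsto (fun x : ℝ => Real.log (1 + 2 * x) / Real.log x)
    atTop (nhds 1) := by
  have := aux_log (fun x => 1 + 2 * x) 1 2 (by norm_num) ?_
  · simpa using this
  have base : Tendsto (fun x : ℝ => x⁻¹ + 2) atTop (nhds (0 + 2)) :=
    tendsto_inv_atTop_zero.add tendsto_const_nhds
  rw [show ((0:ℝ) + 2) = 2 by norm_num] at base
  refine Tendsto.congr' ?_ base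
  filter_upwards [eventually_gt_atTop (0:ℝ)] with x hx
  rw [Real.rpow_one]
  field_simp

lemma hC : Tendsto (fun x : ℝ => Real.log (1 + x / Real.sqrt x) / Real.log x)
    atTop (nhds (1/2)) := by
  apply aux_log _ (1/2) 1 one_pos
  have base : Tendsto (fun x : ℝ => (Real.sqrt x)⁻¹ + 1) atTop (nhds (0 + 1)) :=
    sqrt_inv_tendsto.add tendsto_const_nhds
  rw [show ((0:ℝ) + 1) = 1 by norm_num] at base
  refine Tendsto.congr' ?_ base
  filter_upwards [eventually_gt_atTop (0:ℝ)] with x hx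
  have hs : 0 < Real.sqrt x := Real.sqrt_pos.mpr hx
  have hss : Real.sqrt x * Real.sqrt x = x := Real.mul_self_sqrt hx.le
  rw [← Real.sqrt_eq_rpow]
  field_simp
  linear_combination hss


lemma logb_ratio (g : ℝ → ℝ) (c : ℝ)
    (h : Tendsto (fun x => Real.log (g x) / Real.log x) atTop (nhds c)) :
    Tendsto (fun x => logb 2 (g x) / logb 2 x) atTop (nhds c) := by
  refine h.congr' ?_
  filter_upwards [eventually_gt_atTop (1:ℝ)] with x hx
  have h2 : Real.log 2 ≠ 0 := by
    have := Real.log_pos (by norm_num : (1:ℝ) < 2); linarith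
  have hlx : Real.log x ≠ 0 := (Real.log_pos hx).ne'
  simp only [Real.logb]
  field_simp

theorem cutset_strictly_loose :
    Filter.Tendsto (fun P_X : ℝ =>
        (min ((1/4) * logb 2 P_X + (1/4) * logb 2 P_X)
          (min ((1/4) * logb 2 P_X + (1/2) * logb 2 (1 + P_X / (Real.sqrt P_X + 1)))
            (min ((1/4) * logb 2 P_X + (1/2) * logb 2 (1 + P_X / (Real.sqrt P_X + 1)))
              ((1/2) * logb 2 (1 + 2 * P_X)))))
          / logb 2 P_X)
      Filter.atTop (nhds (1/2)) ∧
    Filter.Tendsto (fun P_X : ℝ =>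
        ((1/2) * ((1/4) * logb 2 P_X + (1/4) * logb 2 P_X
            + (1/2) * logb 2 (1 + P_X / Real.sqrt P_X))
          + (1/4) * logb 2 (8 * π * exp 1)) / logb 2 P_X)
      Filter.atTop (nhds (3/8)) := by
  have hD : ∀ᶠ x : ℝ in atTop, 0 < logb 2 x := by
    filter_upwards [eventually_gt_atTop (1:ℝ)] with x hx
    exact Real.logb_pos one_lt_two hx
  have rA := logb_ratio _ _ hA
  have rB := logb_ratio _ _ hB
  have rC := logb_ratio _ _ hC
  constructor
  · have t1 : Tendsto (fun x : ℝ => ((1/4) * logb 2 x + (1/4) * logb 2 x) / logb 2 x)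
        atTop (nhds (1/2)) := by
      refine Tendsto.congr' ?_ tendsto_const_nhds
      filter_upwards [hD] with x hx
      field_simp
      ring
    have t2 : Tendsto (fun x : ℝ =>
        ((1/4) * logb 2 x + (1/2) * logb 2 (1 + x / (Real.sqrt x + 1))) / logb 2 x)
        atTop (nhds (1/2)) := by
      have base := (rA.const_mul (1/2)).const_add (1/4)
      rw [show ((1:ℝ)/4 + 1/2 * (1/2)) = 1/2 by norm_num] at base
      refine Tendsto.congr' ?_ base
      filter_upwards [hD] with x hx
      field_simp
    have t4 : Tendsto (fun x : ℝ => ((1/2) * logb 2 (1 + 2 * x)) / logb 2 x)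
        atTop (nhds (1/2)) := by
      have base := rB.const_mul (1/2)
      rw [show ((1:ℝ)/2 * 1) = 1/2 by norm_num] at base
      refine Tendsto.congr' ?_ base
      filter_upwards [] with x
      rw [mul_div_assoc]
    have combine := t1.min (t2.min (t2.min t4))
    rw [min_self, min_self, min_self] at combine
    refine Tendsto.congr' ?_ combine
    filter_upwards [hD] with x hx
    rw [min_div_div_right hx.le, min_div_div_right hx.le, min_div_div_right hx.le]
  · have hK : Tendsto (fun x : ℝ => (1/4) * logb 2 (8 * π * exp 1) / logb 2 x)
        atTop (nhds 0) := by
      have := (Real.tendsto_logb_atTop (b := 2) (by norm_num)).inv_tendsto_atTop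
      have base := this.const_mul ((1/4) * logb 2 (8 * π * exp 1))
      rw [mul_zero] at base
      refine Tendsto.congr' ?_ base
      filter_upwards [] with x
      simp [Pi.inv_apply, div_eq_mul_inv]
    have base := ((rC.const_mul (1/4)).const_add (1/4)).add hK
    rw [show ((1:ℝ)/4 + 1/4 * (1/2)) + 0 = 3/8 by norm_num] at base
    refine Tendsto.congr' ?_ base
    filter_upwards [hD] with x hx
    field_simp
    ring
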